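/- arXiv:2209.06988 — 4 statements merged into one kernel-verified Lean document; each statement's English description precedes it below -/
import Mathlib

section
/- Suppose a binary complex S_k + S_ℓ (k ≠ ℓ) is in tier 1 along a D-type tier sequence {x_n}, no unary complex S_j in C is in tier 1, and lim_n x_{n,ℓ} = 0. Then a contradiction follows: in fact lim_n x_{n,k} = ∞ and hence the unary complex S_k (i.e., e_k) is also in tier 1. Consequently, if no unary complex is in tier 1 and e_k + e_ℓ ∈ tier 1, then both x_{n,k} and x_{n,ℓ} have positive limits (at least one infinite). -/
open Filter Topology Finset Real
open scoped ENNReal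

/-- The monomial `(x ∨ 1)^y = ∏_i max(x_i,1)^{y_i}` for `x, y ∈ Z_{≥0}^d`. -/
noncomputable def monN {d : ℕ} (x : Fin d → ℕ) (y : Fin d → ℕ) : ℝ :=
  ∏ i, ((max (x i) 1 : ℕ) : ℝ) ^ (y i)

/-- `y` belongs to tier 1 along the sequence `x`: the ratio `(x_n∨1)^y/(x_n∨1)^{y'}`
has a positive limit for all complexes `y' ∈ C`. -/
def Tier1 {d : ℕ} (C : Finset (Fin d → ℕ)) (x : ℕ → Fin d → ℕ) (y : Fin d → ℕ) : Prop :=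
  ∀ y' ∈ C, ∃ L : ℝ≥0∞, 0 < L ∧
    Tendsto (fun n => ENNReal.ofReal (monN (x n) y / monN (x n) y')) atTop (𝓝 L)

lemma monN_pos {d : ℕ} (x y : Fin d → ℕ) : 0 < monN x y := by
  unfold monN
  exact Finset.prod_pos fun i _ => pow_pos (by positivity) _

lemma monN_unary {d : ℕ} (x : Fin d → ℕ) (i : Fin d) :
    monN x (fun j => if j = i then 1 else 0) = ((max (x i) 1 : ℕ) : ℝ) := by
  unfold monN
  rw [Finset.prod_eq_single i]
  · simp
  · intro j _ hj; simp [hj]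
  · simp

lemma monN_bin {d : ℕ} (x : Fin d → ℕ) (k l : Fin d) :
    monN x (fun j => (if j = k then 1 else 0) + (if j = l then 1 else 0)) =
      ((max (x k) 1 : ℕ) : ℝ) * ((max (x l) 1 : ℕ) : ℝ) := by
  unfold monN
  simp only [pow_add]
  rw [Finset.prod_mul_distrib]
  have h1 := monN_unary x k
  have h2 := monN_unary x l
  unfold monN at h1 h2
  rw [h1, h2]

lemma Tier1.congr' {d : ℕ} {C : Finset (Fin d → ℕ)} {x : ℕ → Fin d → ℕ}
    {y y'' : Fin d → ℕ} (h : Tier1 C x y)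
    (he : ∀ᶠ n in atTop, monN (x n) y = monN (x n) y'') :
    Tier1 C x y'' := by
  intro y' hy'
  obtain ⟨L, hL, ht⟩ := h y' hy'
  exact ⟨L, hL, ht.congr' (he.mono fun n hn => by rw [hn])⟩

lemma coord_ne_zero {d : ℕ} (C : Finset (Fin d → ℕ))
    (k l : Fin d)
    (x : ℕ → Fin d → ℕ) (L : Fin d → ℝ≥0∞)
    (hLim : ∀ i, Tendsto (fun n => ((x n i : ℕ) : ℝ≥0∞)) atTop (𝓝 (L i)))
    (hbin : Tier1 C x
      (fun j => (if j = k then 1 else 0) + (if j = l then 1 else 0)))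
    (hnouni : ¬ Tier1 C x (fun j => if j = l then 1 else 0)) :
    L k ≠ 0 := by
  intro h0
  have hlt : ∀ᶠ n in atTop, ((x n k : ℕ) : ℝ≥0∞) < 1 := by
    have := hLim k
    rw [h0] at this
    exact this.eventually (gt_mem_nhds (by norm_num))
  have hzero : ∀ᶠ n in atTop, x n k = 0 := by
    filter_upwards [hlt] with n hn
    have : (x n k : ℕ) < 1 := by exact_mod_cast hn
    omega
  apply hnouni
  refine hbin.congr' ?_
  filter_upwards [hzero] with n hn
  rw [monN_bin, monN_unary, hn]
  simp

/-- if the binary complex `S_k + S_ℓ` (`k ≠ ℓ`) is in tier 1 along a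
D-type tier sequence while no unary complex is in tier 1, then both `x_{n,k}` and
`x_{n,ℓ}` have positive limits, at least one of which is infinite. -/
theorem binary_tier_one_coordinates_pos (d : ℕ) (hd : 1 ≤ d) (C : Finset (Fin d → ℕ))
    (k l : Fin d) (hkl : k ≠ l)
    (hunary : ∀ i : Fin d, (fun j => if j = i then 1 else 0) ∈ C)
    (hbinC : (fun j => (if j = k then 1 else 0) + (if j = l then 1 else 0) : Fin d → ℕ) ∈ C)
    (x : ℕ → Fin d → ℕ) (L : Fin d → ℝ≥0∞)
    (hLim : ∀ i, Tendsto (fun n => ((x n i : ℕ) : ℝ≥0∞)) atTop (𝓝 (L i)))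
    (hinf : ∃ i, Tendsto (fun n => x n i) atTop atTop)
    (hRatio : ∀ y ∈ C, ∀ y' ∈ C, ∃ M : ℝ≥0∞,
      Tendsto (fun n => ENNReal.ofReal (monN (x n) y / monN (x n) y')) atTop (𝓝 M))
    (hbin : Tier1 C x
      (fun j => (if j = k then 1 else 0) + (if j = l then 1 else 0)))
    (hnouni : ∀ i : Fin d, ¬ Tier1 C x (fun j => if j = i then 1 else 0)) :
    0 < L k ∧ 0 < L l ∧ (L k = ⊤ ∨ L l = ⊤) := by
  have hk0 : L k ≠ 0 := coord_ne_zero C k l x L hLim hbin (hnouni l)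
  have hl0 : L l ≠ 0 := by
    refine coord_ne_zero C l k x L hLim ?_ (hnouni k)
    refine hbin.congr' ?_
    filter_upwards with n
    rw [monN_bin, monN_bin, mul_comm]
  refine ⟨lt_of_le_of_ne zero_le (Ne.symm hk0),
    lt_of_le_of_ne zero_le (Ne.symm hl0), ?_⟩
  by_contra hcon
  push_neg at hcon
  obtain ⟨hkt, hlt⟩ := hcon
  obtain ⟨i, hi⟩ := hinf
  -- get real bounds on x n k and x n l
  have hbound : ∀ (a : Fin d), L a ≠ ⊤ → ∃ B : ℝ,
      ∀ᶠ n in atTop, ((max (x n a) 1 : ℕ) : ℝ) ≤ max B 1 := by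
    intro a ha
    refine ⟨(L a + 1).toReal, ?_⟩
    have hlt1 : L a < L a + 1 := ENNReal.lt_add_right ha one_ne_zero
    have hev : ∀ᶠ n in atTop, ((x n a : ℕ) : ℝ≥0∞) < L a + 1 :=
      (hLim a).eventually (gt_mem_nhds hlt1)
    filter_upwards [hev] with n hn
    have h1 : ((x n a : ℕ) : ℝ) ≤ (L a + 1).toReal := by
      have := ENNReal.toReal_mono (by simp [ha]) hn.le
      simpa using this
    have : ((max (x n a) 1 : ℕ) : ℝ) = max ((x n a : ℕ) : ℝ) 1 := by
      push_cast [Nat.cast_max]; ring_nf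
    rw [this]
    exact max_le_max h1 le_rfl
  obtain ⟨Bk, hBk⟩ := hbound k hkt
  obtain ⟨Bl, hBl⟩ := hbound l hlt
  -- denominator tends to infinity
  have hden : Tendsto (fun n => ((max (x n i) 1 : ℕ) : ℝ)) atTop atTop := by
    apply tendsto_atTop_mono (fun n => ?_) (tendsto_natCast_atTop_atTop.comp hi)
    exact_mod_cast Nat.cast_le.mpr (le_max_left (x n i) 1)
  -- ratio tends to 0
  have hzero : Tendsto (fun n => monN (x n)
      (fun j => (if j = k then 1 else 0) + (if j = l then 1 else 0)) /
      monN (x n) (fun j => if j = i then 1 else 0)) atTop (𝓝 0) := by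
    refine squeeze_zero' (g := fun n => (max Bk 1 * max Bl 1) /
      ((max (x n i) 1 : ℕ) : ℝ)) ?_ ?_
      (Tendsto.div_atTop tendsto_const_nhds hden)
    · filter_upwards with n
      have h1 := monN_pos (x n) (fun j => (if j = k then 1 else 0) + (if j = l then 1 else 0))
      have h2 := monN_pos (x n) (fun j => if j = i then (1:ℕ) else 0)
      positivity
    · filter_upwards [hBk, hBl] with n h1 h2
      rw [monN_bin, monN_unary]
      have hipos : (0:ℝ) < ((max (x n i) 1 : ℕ) : ℝ) := by positivity
      gcongr <;> first
        | exact h1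
        | exact h2
        | positivity
        | exact_mod_cast Nat.one_le_iff_ne_zero.mpr (by simp)
  have hzero' : Tendsto (fun n => ENNReal.ofReal (monN (x n)
      (fun j => (if j = k then 1 else 0) + (if j = l then 1 else 0)) /
      monN (x n) (fun j => if j = i then 1 else 0))) atTop (𝓝 0) := by
    have := ENNReal.tendsto_ofReal hzero
    simpa using this
  obtain ⟨M, hM, hMt⟩ := hbin _ (hunary i)
  exact absurd (tendsto_nhds_unique hMt hzero') (ne_of_gt hM)
end

section
/- Let (S,C,R) be a reaction network with species S_1,…,S_d such that each species has an outflow reaction S_i → ∅ and a subset of inflow reactions ∅ → S_i, and suppose there is a w ∈ R_{>0}^d with w·(y'−y) = 0 for every non-flow reaction y → y'. Then the generator A of the mass-action Markov chain applied to the linear function W(x) = w·x satisfies A W(x) ≤ −a W(x) + b for all x ∈ Z_{\ge 0}^d, where a = min_i κ_{S_i→∅} > 0 and b = Σ_{i∈I} κ_{∅→S_i} w_i. -/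
open Filter Topology Finset Real

/-- for an open-ish network (all outflows, some inflows) with a conserved
positive vector `w` for the non-flow reactions, the generator applied to `W(x) = w·x`
satisfies `A W(x) ≤ −a W(x) + b` with `a = min_i κ_{S_i→∅}` and `b = Σ_{i∈I} κ_{∅→S_i} w_i`. -/
theorem linear_lyapunov_drift (d : ℕ) [NeZero d]
    (R : Finset ((Fin d → ℕ) × (Fin d → ℕ)))
    (κr : (Fin d → ℕ) × (Fin d → ℕ) → ℝ) (hκr : ∀ r ∈ R, 0 < κr r)
    (κout : Fin d → ℝ) (hκout : ∀ i, 0 < κout i)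
    (I : Finset (Fin d)) (κin : Fin d → ℝ) (hκin : ∀ i ∈ I, 0 < κin i)
    (w : Fin d → ℝ) (hw : ∀ i, 0 < w i)
    (hcons : ∀ r ∈ R, ∑ j, w j * ((r.2 j : ℝ) - (r.1 j : ℝ)) = 0)
    (x : Fin d → ℕ) :
    (∑ r ∈ R, (κr r * ∏ j, ((x j).descFactorial (r.1 j) : ℝ)) *
        (∑ j, w j * ((r.2 j : ℝ) - (r.1 j : ℝ))))
      + (∑ i, κout i * (x i : ℝ) * (-(w i)))
      + (∑ i ∈ I, κin i * (w i)) ≤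
    -(Finset.univ.inf' Finset.univ_nonempty κout) * (∑ i, w i * (x i : ℝ))
      + ∑ i ∈ I, κin i * (w i) := by
  have h1 : (∑ r ∈ R, (κr r * ∏ j, ((x j).descFactorial (r.1 j) : ℝ)) *
        (∑ j, w j * ((r.2 j : ℝ) - (r.1 j : ℝ)))) = 0 := by
    apply Finset.sum_eq_zero
    intro r hr
    rw [hcons r hr, mul_zero]
  rw [h1, zero_add]
  have h2 : (∑ i, κout i * (x i : ℝ) * (-(w i))) ≤
      -(Finset.univ.inf' Finset.univ_nonempty κout) * (∑ i, w i * (x i : ℝ)) := by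
    rw [neg_mul, Finset.mul_sum, ← Finset.sum_neg_distrib]
    apply Finset.sum_le_sum
    intro i _
    have ha : Finset.univ.inf' Finset.univ_nonempty κout ≤ κout i :=
      Finset.inf'_le _ (Finset.mem_univ i)
    have hx : (0:ℝ) ≤ (x i : ℝ) := Nat.cast_nonneg _
    nlinarith [mul_nonneg (mul_nonneg (hw i).le hx) (sub_nonneg.mpr ha)]
  linarith
end

section
/- Let (S,C,R) be a binary reaction network (all complexes y satisfy ‖y‖₁ ≤ 2) that is double-full (2S_i ∈ C for every species S_i). Then along any D-type tier sequence {x_n}, some double complex 2S_i belongs to tier 1; i.e., there exists i with lim_n x_{n,i} = ∞ and lim_n (x_n∨1)^{2e_i}/(x_n∨1)^{y'} > 0 for every complex y' ∈ C. -/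
open Filter Topology Finset Real
open scoped ENNReal

lemma monN_double {d : ℕ} (x : Fin d → ℕ) (i : Fin d) :
    monN x (fun j => if j = i then 2 else 0) = ((max (x i) 1 : ℕ) : ℝ) ^ 2 := by
  rw [monN, Finset.prod_eq_single i] <;> simp (config := {contextual := true})

lemma sq_bound {a b B : ℝ} (ha : 1 ≤ a) (hb : 1 ≤ b) (hB : 1 ≤ B) (h : a^2 ≤ B * b^2) :
    a ≤ B * b := by
  rcases le_or_gt a b with h1 | h1
  · nlinarith
  · nlinarith

lemma ev_bound {r : ℕ → ℝ} {L : ℝ≥0∞}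
    (h : Tendsto (fun n => ENNReal.ofReal (r n)) atTop (𝓝 L)) (hL : L ≠ ⊤) :
    ∀ᶠ n in atTop, r n < (L + 1).toReal := by
  have h1 : ∀ᶠ n in atTop, ENNReal.ofReal (r n) < L + 1 :=
    h.eventually_lt_const (ENNReal.lt_add_right hL one_ne_zero)
  have hne : L + 1 ≠ ⊤ := ENNReal.add_ne_top.2 ⟨hL, ENNReal.one_ne_top⟩
  filter_upwards [h1] with n hn
  rcases le_or_gt (r n) 0 with h0 | h0
  · exact h0.trans_lt (ENNReal.toReal_pos (by simp) hne)
  · exact (ENNReal.ofReal_lt_iff_lt_toReal h0.le hne).1 hn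

lemma monN_le {d : ℕ} (x : Fin d → ℕ) (y : Fin d → ℕ) (c : ℝ) (hc : 1 ≤ c)
    (hy : ∑ j, y j ≤ 2) (h : ∀ j, ((max (x j) 1 : ℕ) : ℝ) ≤ c) : monN x y ≤ c ^ 2 := by
  calc monN x y ≤ ∏ j, c ^ (y j) :=
        Finset.prod_le_prod (fun j _ => by positivity)
          (fun j _ => pow_le_pow_left₀ (by positivity) (h j) _)
    _ = c ^ (∑ j, y j) := by rw [Finset.prod_pow_eq_pow_sum]
    _ ≤ c ^ 2 := pow_le_pow_right₀ hc hy

lemma ofReal_div_mul {a b c : ℝ} (ha : 0 ≤ a) (hb : 0 < b) :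
    ENNReal.ofReal (a / b) * ENNReal.ofReal (b / c) = ENNReal.ofReal (a / c) := by
  rw [← ENNReal.ofReal_mul (by positivity)]
  congr 1
  rw [div_mul_div_comm, mul_comm a b, mul_div_mul_left _ _ hb.ne']

/-- part (ii) of Lemma 8 of the paper: for a binary double-full
network, along any D-type tier sequence some double complex `2S_i` is in tier 1. -/
theorem double_complex_in_tier_one (d : ℕ) (hd : 1 ≤ d) (C : Finset (Fin d → ℕ))
    (hbinary : ∀ y ∈ C, ∑ j, y j ≤ 2)
    (hfull : ∀ i : Fin d, (fun j => if j = i then 2 else 0 : Fin d → ℕ) ∈ C)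
    (x : ℕ → Fin d → ℕ)
    (hLim : ∀ j, ∃ L : ℝ≥0∞, Tendsto (fun n => ((x n j : ℕ) : ℝ≥0∞)) atTop (𝓝 L))
    (hinf : ∃ j, Tendsto (fun n => x n j) atTop atTop)
    (hRatio : ∀ y ∈ C, ∀ y' ∈ C, ∃ L : ℝ≥0∞,
      Tendsto (fun n => ENNReal.ofReal (monN (x n) y / monN (x n) y')) atTop (𝓝 L)) :
    ∃ i : Fin d, Tendsto (fun n => x n i) atTop atTop ∧
      ∀ y' ∈ C, ∃ L : ℝ≥0∞, 0 < L ∧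
        Tendsto
          (fun n =>
            ENNReal.ofReal (monN (x n) (fun j => if j = i then 2 else 0) / monN (x n) y'))
          atTop (𝓝 L) := by
  classical
  -- abbreviations
  set D : Fin d → (Fin d → ℕ) := fun i j => if j = i then 2 else 0 with hD
  have hmpos : ∀ n i, (0:ℝ) < ((max (x n i) 1 : ℕ) : ℝ) := fun n i => by positivity
  have hm1 : ∀ n i, (1:ℝ) ≤ ((max (x n i) 1 : ℕ) : ℝ) := fun n i => by
    exact_mod_cast le_max_right (x n i) 1
  choose L hL using fun i j : Fin d => hRatio _ (hfull i) _ (hfull j)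
  -- multiplicativity of the ratio functions
  have hfmul : ∀ (i j k : Fin d) (n : ℕ),
      ENNReal.ofReal (monN (x n) (D i) / monN (x n) (D j)) *
        ENNReal.ofReal (monN (x n) (D j) / monN (x n) (D k)) =
      ENNReal.ofReal (monN (x n) (D i) / monN (x n) (D k)) := fun i j k n =>
    ofReal_div_mul (monN_pos _ _).le (monN_pos _ _)
  have hLself : ∀ i, L i i = 1 := by
    intro i
    refine tendsto_nhds_unique (hL i i) ?_
    have : (fun n => ENNReal.ofReal (monN (x n) (D i) / monN (x n) (D i))) =
        fun _ => (1 : ℝ≥0∞) := by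
      funext n; rw [div_self (monN_pos _ _).ne', ENNReal.ofReal_one]
    rw [this]; exact tendsto_const_nhds
  -- totality
  have htot : ∀ i j, L i j ≠ ⊤ ∨ L j i ≠ ⊤ := by
    intro i j
    by_contra h
    push_neg at h
    obtain ⟨h1, h2⟩ := h
    have hm := ENNReal.Tendsto.mul (hL i j) (Or.inl (by simp [h1])) (hL j i) (Or.inl (by simp [h2]))
    have hone : Tendsto (fun _ : ℕ => (1 : ℝ≥0∞)) atTop (𝓝 (L i j * L j i)) := by
      refine hm.congr fun n => ?_
      rw [hfmul i j i n, div_self (monN_pos _ _).ne', ENNReal.ofReal_one]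
    have := tendsto_nhds_unique hone tendsto_const_nhds
    rw [h1, h2] at this
    simp at this
  -- transitivity
  have htrans : ∀ i j k, L i j ≠ ⊤ → L j k ≠ ⊤ → L i k ≠ ⊤ := by
    intro i j k h1 h2
    have hm := ENNReal.Tendsto.mul (hL i j) (Or.inr h2) (hL j k) (Or.inr h1)
    have : Tendsto (fun n => ENNReal.ofReal (monN (x n) (D i) / monN (x n) (D k)))
        atTop (𝓝 (L i j * L j k)) := hm.congr fun n => hfmul i j k n
    rw [tendsto_nhds_unique (hL i k) this]
    exact ENNReal.mul_ne_top h1 h2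
  -- a maximal coordinate
  have hmax : ∀ s : Finset (Fin d), s.Nonempty → ∃ i ∈ s, ∀ j ∈ s, L j i ≠ ⊤ := by
    intro s
    induction s using Finset.induction_on with
    | empty => intro h; simp at h
    | @insert a s ha ih =>
      intro _
      rcases s.eq_empty_or_nonempty with rfl | hs
      · exact ⟨a, by simp, by simp [hLself a]⟩
      · obtain ⟨i, his, hi⟩ := ih hs
        rcases htot a i with h1 | h1
        · refine ⟨i, Finset.mem_insert_of_mem his, ?_⟩
          intro j hj
          rcases Finset.mem_insert.1 hj with rfl | hj
          · exact h1
          · exact hi j hj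
        · refine ⟨a, Finset.mem_insert_self a s, ?_⟩
          intro j hj
          rcases Finset.mem_insert.1 hj with rfl | hj
          · simp [hLself j]
          · exact htrans j i a (hi j hj) h1
  have hne : (Finset.univ : Finset (Fin d)).Nonempty := ⟨⟨0, hd⟩, Finset.mem_univ _⟩
  obtain ⟨i, -, hi⟩ := hmax Finset.univ hne
  have hi' : ∀ j, L j i ≠ ⊤ := fun j => hi j (Finset.mem_univ j)
  -- constants
  set B : Fin d → ℝ := fun j => (L j i + 1).toReal with hBdef
  have hBpos : ∀ j, 0 < B j := fun j =>
    ENNReal.toReal_pos (by simp) (ENNReal.add_ne_top.2 ⟨hi' j, ENNReal.one_ne_top⟩)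
  set K : ℝ := 1 + ∑ j, B j with hKdef
  have hK1 : 1 ≤ K := le_add_of_nonneg_right (Finset.sum_nonneg fun j _ => (hBpos j).le)
  have hBK : ∀ j, B j ≤ K := fun j => by
    have := Finset.single_le_sum (f := B) (fun k _ => (hBpos k).le) (Finset.mem_univ j)
    simp only [hKdef]; linarith
  -- eventual bound: every coordinate is ≤ K * (coordinate i)
  have hev : ∀ᶠ n in atTop, ∀ j,
      ((max (x n j) 1 : ℕ) : ℝ) ≤ K * ((max (x n i) 1 : ℕ) : ℝ) := by
    have h1 : ∀ᶠ n in atTop, ∀ j,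
        monN (x n) (D j) / monN (x n) (D i) < B j :=
      eventually_all.2 fun j => ev_bound (hL j i) (hi' j)
    filter_upwards [h1] with n hn j
    have h2 := hn j
    rw [hD] at h2
    rw [monN_double, monN_double, div_lt_iff₀ (by positivity)] at h2
    refine sq_bound (hm1 n j) (hm1 n i) hK1 ?_
    have := hBK j
    nlinarith [pow_pos (hmpos n i) 2]
  -- coordinate i tends to infinity
  have hmi : Tendsto (fun n => ((max (x n i) 1 : ℕ) : ℝ)) atTop atTop := by
    obtain ⟨j0, hj0⟩ := hinf
    have hj0R : Tendsto (fun n => ((x n j0 : ℕ) : ℝ)) atTop atTop :=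
      tendsto_natCast_atTop_iff.2 hj0
    have hmj0 : Tendsto (fun n => ((max (x n j0) 1 : ℕ) : ℝ)) atTop atTop :=
      tendsto_atTop_mono (fun n => by exact_mod_cast le_max_left (x n j0) 1) hj0R
    have hKmi : Tendsto (fun n => K * ((max (x n i) 1 : ℕ) : ℝ)) atTop atTop :=
      tendsto_atTop_mono' atTop (hev.mono fun n hn => hn j0) hmj0
    have := hKmi.atTop_div_const (lt_of_lt_of_le one_pos hK1)
    refine this.congr fun n => ?_
    field_simp
  have hxi : Tendsto (fun n => x n i) atTop atTop := by
    rw [← tendsto_natCast_atTop_iff (R := ℝ)]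
    have h1 : Tendsto (fun n => ((max (x n i) 1 : ℕ) : ℝ) + (-1)) atTop atTop :=
      tendsto_atTop_add_const_right atTop (-1) hmi
    refine tendsto_atTop_mono (fun n => ?_) h1
    have hmx : (max (x n i) 1 : ℕ) ≤ x n i + 1 :=
      max_le (Nat.le_succ _) (Nat.succ_le_succ (Nat.zero_le _))
    have h2 : ((max (x n i) 1 : ℕ) : ℝ) ≤ ((x n i : ℕ) : ℝ) + 1 := by exact_mod_cast hmx
    linarith
  refine ⟨i, hxi, ?_⟩
  intro y' hy'
  obtain ⟨L', hL'⟩ := hRatio _ (hfull i) y' hy'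
  refine ⟨L', ?_, hL'⟩
  have hKpos : (0:ℝ) < K := lt_of_lt_of_le one_pos hK1
  have hevr : ∀ᶠ n in atTop, ENNReal.ofReal ((K ^ 2)⁻¹) ≤
      ENNReal.ofReal (monN (x n) (fun j => if j = i then 2 else 0) / monN (x n) y') := by
    filter_upwards [hev] with n hn
    refine ENNReal.ofReal_le_ofReal ?_
    have hmon : monN (x n) y' ≤ (K * ((max (x n i) 1 : ℕ) : ℝ)) ^ 2 :=
      monN_le _ _ _ (le_trans hK1 (le_mul_of_one_le_right hKpos.le (hm1 n i))) 
        (hbinary y' hy') hn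
    rw [show (fun j => if j = i then 2 else 0 : Fin d → ℕ) = D i from rfl, monN_double,
      le_div_iff₀ (monN_pos _ _), inv_mul_eq_div, div_le_iff₀ (by positivity)]
    calc monN (x n) y' ≤ (K * ((max (x n i) 1 : ℕ) : ℝ)) ^ 2 := hmon
      _ = ((max (x n i) 1 : ℕ) : ℝ) ^ 2 * K ^ 2 := by ring
  have hle : ENNReal.ofReal ((K ^ 2)⁻¹) ≤ L' := ge_of_tendsto hL' hevr
  exact lt_of_lt_of_le (ENNReal.ofReal_pos.2 (by positivity)) hle
end

section
/- Let (S,C,R) be a binary double-full reaction network such that for each double complex 2S_i there is a directed path in the reaction graph from 2S_i to a complex y with ‖y‖₁ ≤ 1. Then along any D-type tier sequence {x_n} there exists a reaction y → y' ∈ R with y in tier 1 and lim_n (x_n∨1)^{y'}/(x_n∨1)^y = 0 (i.e., y strictly dominates y'). -/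
open Filter Topology Finset Real
open scoped ENNReal

lemma one_le_monN {d : ℕ} (x y : Fin d → ℕ) : 1 ≤ monN x y := by
  unfold monN
  have : ∀ i ∈ Finset.univ, (1:ℝ) ≤ ((max (x i) 1 : ℕ) : ℝ) ^ (y i) := by
    intro i _
    apply one_le_pow₀
    exact_mod_cast Nat.le_max_right (x i) 1
  calc (1:ℝ) = ∏ _i : Fin d, 1 := by simp
  _ ≤ _ := Finset.prod_le_prod (by simp) (by simpa using this)

def e2 {d : ℕ} (i : Fin d) : Fin d → ℕ := fun j => if j = i then 2 else 0

lemma monN_single {d : ℕ} (x : Fin d → ℕ) (i : Fin d) (a : ℕ) :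
    monN x (fun j => if j = i then a else 0) = ((max (x i) 1 : ℕ) : ℝ) ^ a := by
  unfold monN
  rw [Finset.prod_eq_single i]
  · simp
  · intro b _ hb; simp [hb]
  · simp

lemma monN_e2 {d : ℕ} (x : Fin d → ℕ) (i : Fin d) :
    monN x (e2 i) = ((max (x i) 1 : ℕ) : ℝ) ^ 2 := monN_single x i 2

lemma exists_rel_maximal {α : Type*} (r : α → α → Prop) (htrans : ∀ a b c, r a b → r b c → r a c)
    (hirr : ∀ a, ¬ r a a) (s : Finset α) (hs : s.Nonempty) :
    ∃ a ∈ s, ∀ b ∈ s, ¬ r a b := by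
  classical
  induction s using Finset.induction_on with
  | empty => exact absurd hs (by simp)
  | @insert a s ha ih =>
    by_cases hns : s.Nonempty
    · obtain ⟨b, hb, hmax⟩ := ih hns
      by_cases hba : r b a
      · refine ⟨a, Finset.mem_insert_self _ _, ?_⟩
        intro c hc
        rcases Finset.mem_insert.mp hc with rfl | hc
        · exact hirr _
        · intro hac; exact hmax c hc (htrans _ _ _ hba hac)
      · refine ⟨b, Finset.mem_insert_of_mem hb, ?_⟩
        intro c hc
        rcases Finset.mem_insert.mp hc with rfl | hc
        · exact hba
        · exact hmax c hc
    · simp only [Finset.not_nonempty_iff_eq_empty] at hns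
      subst hns
      exact ⟨a, Finset.mem_insert_self _ _, by simpa using hirr a⟩

lemma ofReal_tendsto_zero {f : ℕ → ℝ} (hf : ∀ n, 0 ≤ f n)
    (h : Tendsto (fun n => ENNReal.ofReal (f n)) atTop (𝓝 0)) :
    Tendsto f atTop (𝓝 0) := by
  have := (ENNReal.tendsto_toReal (by simp : (0:ℝ≥0∞) ≠ ⊤)).comp h
  have heq : (ENNReal.toReal ∘ fun n => ENNReal.ofReal (f n)) = f := by
    funext n; simp [Function.comp, ENNReal.toReal_ofReal (hf n)]
  rw [heq] at this; simpa using this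

lemma tendsto_ofReal_zero {f : ℕ → ℝ} (h : Tendsto f atTop (𝓝 0)) :
    Tendsto (fun n => ENNReal.ofReal (f n)) atTop (𝓝 0) := by
  simpa [Function.comp_def] using (ENNReal.continuous_ofReal.tendsto 0).comp h

lemma eventually_pos_of_tendsto_pos {f : ℕ → ℝ} {L : ℝ≥0∞} (hL : 0 < L)
    (h : Tendsto (fun n => ENNReal.ofReal (f n)) atTop (𝓝 L)) :
    ∃ ε : ℝ, 0 < ε ∧ ∀ᶠ n in atTop, ε ≤ f n := by
  obtain ⟨c, hc0, hcL⟩ := exists_between hL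
  have hev : ∀ᶠ n in atTop, c < ENNReal.ofReal (f n) := h.eventually (eventually_gt_nhds hcL)
  refine ⟨c.toReal, ENNReal.toReal_pos hc0.ne' hcL.ne_top, ?_⟩
  filter_upwards [hev] with n hn
  exact le_of_lt ((ENNReal.lt_ofReal_iff_toReal_lt hcL.ne_top).mp hn)

lemma not_tier1_of_ratio_zero {d : ℕ} {C : Finset (Fin d → ℕ)} {x : ℕ → Fin d → ℕ}
    {y y' : Fin d → ℕ} (hy' : y' ∈ C)
    (h0 : Tendsto (fun n => monN (x n) y / monN (x n) y') atTop (𝓝 0)) :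
    ¬ Tier1 C x y := by
  intro ht
  obtain ⟨L, hLpos, hLt⟩ := ht y' hy'
  exact hLpos.ne' (tendsto_nhds_unique hLt (tendsto_ofReal_zero h0))

lemma monN_le_e2 {d : ℕ} (hd : 1 ≤ d) (x y : Fin d → ℕ) (hy : ∑ j, y j ≤ 2) :
    ∃ j0 : Fin d, monN x y ≤ monN x (e2 j0) := by
  have hne : (Finset.univ : Finset (Fin d)).Nonempty := ⟨⟨0, hd⟩, mem_univ _⟩
  obtain ⟨j0, _, hj0⟩ := Finset.exists_mem_eq_sup' hne (fun i => ((max (x i) 1 : ℕ) : ℝ))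
  set A : ℝ := Finset.univ.sup' hne (fun i => ((max (x i) 1 : ℕ) : ℝ)) with hA
  have hA1 : (1:ℝ) ≤ A := by
    rw [hj0]; exact_mod_cast Nat.le_max_right (x j0) 1
  refine ⟨j0, ?_⟩
  have h1 : monN x y ≤ A ^ (∑ j, y j) := by
    unfold monN
    rw [← Finset.prod_pow_eq_pow_sum]
    apply Finset.prod_le_prod
    · intro i _; positivity
    · intro i _
      apply pow_le_pow_left₀ (by positivity)
      exact Finset.le_sup' (fun i => ((max (x i) 1 : ℕ) : ℝ)) (mem_univ i)
  have h2 : A ^ (∑ j, y j) ≤ A ^ 2 := pow_le_pow_right₀ hA1 hy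
  rw [monN_e2, ← hj0]
  exact h1.trans h2

/-- part (iii) of Lemma 8 of the paper: for a binary double-full network
in which each double complex `2S_i` has a directed path in the reaction graph to a
complex of ℓ¹-norm at most 1, along any D-type tier sequence there is a reaction
`y → y'` with `y` in tier 1 strictly dominating `y'`. -/
theorem exists_descending_reaction (d : ℕ) (hd : 1 ≤ d) (C : Finset (Fin d → ℕ))
    (R : Finset ((Fin d → ℕ) × (Fin d → ℕ)))
    (hRC : ∀ r ∈ R, r.1 ∈ C ∧ r.2 ∈ C)
    (hbinary : ∀ y ∈ C, ∑ j, y j ≤ 2)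
    (hfull : ∀ i : Fin d, (fun j => if j = i then 2 else 0 : Fin d → ℕ) ∈ C)
    (hpath : ∀ i : Fin d, ∃ (k : ℕ) (c : ℕ → (Fin d → ℕ)),
      c 0 = (fun j => if j = i then 2 else 0) ∧ (∑ j, c k j ≤ 1) ∧
        ∀ m < k, (c m, c (m + 1)) ∈ R)
    (x : ℕ → Fin d → ℕ)
    (hLim : ∀ j, ∃ L : ℝ≥0∞, Tendsto (fun n => ((x n j : ℕ) : ℝ≥0∞)) atTop (𝓝 L))
    (hinf : ∃ j, Tendsto (fun n => x n j) atTop atTop)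
    (hRatio : ∀ y ∈ C, ∀ y' ∈ C, ∃ L : ℝ≥0∞,
      Tendsto (fun n => ENNReal.ofReal (monN (x n) y / monN (x n) y')) atTop (𝓝 L)) :
    ∃ y y' : Fin d → ℕ, (y, y') ∈ R ∧ Tier1 C x y ∧
      Tendsto (fun n => monN (x n) y' / monN (x n) y) atTop (𝓝 0) := by
  classical
  have hne : (Finset.univ : Finset (Fin d)).Nonempty := ⟨⟨0, hd⟩, mem_univ _⟩
  have he2C : ∀ i, e2 i ∈ C := fun i => hfull i
  obtain ⟨jinf, hjinf⟩ := hinf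
  -- the max-coordinate at jinf tends to infinity
  have hFinf : Tendsto (fun n => ((max (x n jinf) 1 : ℕ) : ℝ)) atTop atTop := by
    apply tendsto_natCast_atTop_atTop.comp
    exact tendsto_atTop_mono (fun n => Nat.le_max_left _ _) hjinf
  have hGinf : Tendsto (fun n => ((max (x n jinf) 1 : ℕ) : ℝ) ^ 2) atTop atTop := by
    apply tendsto_atTop_mono (fun n => ?_) hFinf
    have h1 : (1:ℝ) ≤ ((max (x n jinf) 1 : ℕ) : ℝ) := by
      exact_mod_cast Nat.le_max_right _ _
    nlinarith
  -- choose a maximal index i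
  obtain ⟨i, _, hmax⟩ := exists_rel_maximal
    (fun a b => Tendsto (fun n => monN (x n) (e2 a) / monN (x n) (e2 b)) atTop (𝓝 0))
    (fun a b c hab hbc => by
      have := hab.mul hbc
      rw [mul_zero] at this
      have heq : (fun n => monN (x n) (e2 a) / monN (x n) (e2 b)
          * (monN (x n) (e2 b) / monN (x n) (e2 c)))
          = fun n => monN (x n) (e2 a) / monN (x n) (e2 c) := by
        funext n
        have hb := (monN_pos (x n) (e2 b)).ne'
        field_simp
      rwa [heq] at this)
    (fun a hr => by
      have heq : (fun n => monN (x n) (e2 a) / monN (x n) (e2 a)) = fun _ => (1:ℝ) := by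
        funext n; exact div_self (monN_pos (x n) (e2 a)).ne'
      have hr2 : Tendsto (fun n => monN (x n) (e2 a) / monN (x n) (e2 a)) atTop (𝓝 0) := hr
      rw [heq] at hr2
      exact one_ne_zero (tendsto_nhds_unique
        (tendsto_const_nhds : Tendsto (fun _ : ℕ => (1:ℝ)) atTop (𝓝 1)) hr2))
    Finset.univ hne
  -- e2 i is in tier 1
  have hTop : Tier1 C x (e2 i) := by
    intro y' hy'
    obtain ⟨L, hL⟩ := hRatio (e2 i) (he2C i) y' hy'
    refine ⟨L, ?_, hL⟩
    rw [pos_iff_ne_zero]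
    intro hL0
    subst hL0
    have hzero : Tendsto (fun n => monN (x n) (e2 i) / monN (x n) y') atTop (𝓝 0) :=
      ofReal_tendsto_zero (fun n => div_nonneg (monN_pos _ _).le (monN_pos _ _).le) hL
    have hMj : ∀ j : Fin d, ∃ ε : ℝ, 0 < ε ∧
        ∀ᶠ n in atTop, ε ≤ monN (x n) (e2 i) / monN (x n) (e2 j) := by
      intro j
      obtain ⟨M, hM⟩ := hRatio (e2 i) (he2C i) (e2 j) (he2C j)
      have hM0 : M ≠ 0 := by
        intro h0; subst h0
        exact hmax j (mem_univ j)
          (ofReal_tendsto_zero (fun n => div_nonneg (monN_pos _ _).le (monN_pos _ _).le) hM)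
      exact eventually_pos_of_tendsto_pos (pos_iff_ne_zero.mpr hM0) hM
    choose ε hε0 hεev using hMj
    set ε0 : ℝ := Finset.univ.inf' hne ε with hε0def
    have hε00 : 0 < ε0 := by
      rw [hε0def, Finset.lt_inf'_iff]
      exact fun j _ => hε0 j
    have hall : ∀ᶠ n in atTop, ∀ j, ε j ≤ monN (x n) (e2 i) / monN (x n) (e2 j) :=
      eventually_all.mpr hεev
    have hlt : ∀ᶠ n in atTop, monN (x n) (e2 i) / monN (x n) y' < ε0 :=
      hzero.eventually_lt_const hε00
    have hcon : ∀ᶠ _n : ℕ in atTop, False := by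
      filter_upwards [hall, hlt] with n h1 h2
      obtain ⟨j0, hj0⟩ := monN_le_e2 hd (x n) y' (hbinary y' hy')
      have step1 : monN (x n) (e2 i) / monN (x n) (e2 j0)
          ≤ monN (x n) (e2 i) / monN (x n) y' := by
        gcongr
        · exact (monN_pos _ _).le
        · exact monN_pos _ _
      have step2 : ε0 ≤ ε j0 := Finset.inf'_le _ (mem_univ j0)
      have := step2.trans ((h1 j0).trans step1)
      linarith
    obtain ⟨n, hn⟩ := hcon.exists
    exact hn
  -- propagation of tier 1 along a non-vanishing ratio
  have hprop : ∀ y'' ∈ C, ∀ y ∈ C, Tier1 C x y →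
      (∃ L : ℝ≥0∞, L ≠ 0 ∧
        Tendsto (fun n => ENNReal.ofReal (monN (x n) y'' / monN (x n) y)) atTop (𝓝 L)) →
      Tier1 C x y'' := by
    intro y'' hy'' y hy ht ⟨L, hL0, hL⟩
    intro y' hy'
    obtain ⟨L', hL'⟩ := hRatio y'' hy'' y' hy'
    refine ⟨L', ?_, hL'⟩
    obtain ⟨a, ha0, haev⟩ := eventually_pos_of_tendsto_pos (pos_iff_ne_zero.mpr hL0) hL
    obtain ⟨Lyy', hLyy'pos, hLyy't⟩ := ht y' hy'
    obtain ⟨b, hb0, hbev⟩ := eventually_pos_of_tendsto_pos hLyy'pos hLyy't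
    have hev : ∀ᶠ n in atTop,
        ENNReal.ofReal (a * b) ≤ ENNReal.ofReal (monN (x n) y'' / monN (x n) y') := by
      filter_upwards [haev, hbev] with n h1 h2
      apply ENNReal.ofReal_le_ofReal
      have heq : monN (x n) y'' / monN (x n) y' =
          (monN (x n) y'' / monN (x n) y) * (monN (x n) y / monN (x n) y') := by
        have hb := (monN_pos (x n) y).ne'
        field_simp
      rw [heq]
      exact mul_le_mul h1 h2 hb0.le (le_trans ha0.le h1)
    have : ENNReal.ofReal (a * b) ≤ L' := ge_of_tendsto hL' hev
    have hab : (0:ℝ≥0∞) < ENNReal.ofReal (a * b) := by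
      rw [ENNReal.ofReal_pos]; positivity
    exact lt_of_lt_of_le hab this
  -- walk the path from e2 i
  obtain ⟨k, c, hc0, hck, hcR⟩ := hpath i
  have hc0' : c 0 = e2 i := hc0
  have main : ∀ m, m ≤ k → Tier1 C x (c m) ∨
      (∃ y y' : Fin d → ℕ, (y, y') ∈ R ∧ Tier1 C x y ∧
        Tendsto (fun n => monN (x n) y' / monN (x n) y) atTop (𝓝 0)) := by
    intro m
    induction m with
    | zero => intro _; left; rw [hc0']; exact hTop
    | succ m ih =>
      intro hm
      rcases ih (Nat.le_of_succ_le hm) with ht | hdone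
      · have hmk : m < k := Nat.lt_of_succ_le hm
        have hR := hcR m hmk
        have hCm : c m ∈ C := (hRC _ hR).1
        have hCm1 : c (m+1) ∈ C := (hRC _ hR).2
        obtain ⟨L, hL⟩ := hRatio (c (m+1)) hCm1 (c m) hCm
        by_cases hL0 : L = 0
        · right
          refine ⟨c m, c (m+1), hR, ht, ?_⟩
          subst hL0
          exact ofReal_tendsto_zero
            (fun n => div_nonneg (monN_pos _ _).le (monN_pos _ _).le) hL
        · left
          exact hprop (c (m+1)) hCm1 (c m) hCm ht ⟨L, hL0, hL⟩
      · right; exact hdone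
  rcases main k le_rfl with ht | hdone
  swap
  · exact hdone
  -- derive a contradiction: c k has ℓ¹-norm ≤ 1, cannot be in tier 1
  exfalso
  have hkC : c k ∈ C := by
    rcases Nat.eq_zero_or_pos k with rfl | hk
    · rw [hc0'] at hck
      have : ∑ j, e2 i j = 2 := by
        unfold e2
        rw [Finset.sum_ite_eq' Finset.univ i (fun _ => 2)]
        simp
      omega
    · obtain ⟨k', rfl⟩ := Nat.exists_eq_add_of_lt hk
      have := hcR k' (by omega)
      simpa using (hRC _ (by simpa [Nat.add_comm] using this)).2
  by_cases hzero : ∀ j, c k j = 0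
  · have hmon : ∀ n, monN (x n) (c k) = 1 := by
      intro n; unfold monN; simp [hzero]
    apply not_tier1_of_ratio_zero (he2C jinf) ?_ ht
    have heq : (fun n => monN (x n) (c k) / monN (x n) (e2 jinf))
        = fun n => 1 / ((max (x n jinf) 1 : ℕ) : ℝ) ^ 2 := by
      funext n; rw [hmon n, monN_e2]
    rw [heq]
    exact tendsto_const_nhds.div_atTop hGinf
  · push_neg at hzero
    obtain ⟨l, hl⟩ := hzero
    have h1 : c k l = 1 := by
      have hle : c k l ≤ ∑ j, c k j :=
        Finset.single_le_sum (f := c k) (fun _ _ => Nat.zero_le _) (mem_univ l)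
      omega
    have h0 : ∀ j, j ≠ l → c k j = 0 := by
      intro j hj
      by_contra h
      have hsum : c k l + c k j ≤ ∑ m, c k m := by
        have hsub : ({l, j} : Finset (Fin d)) ⊆ Finset.univ := subset_univ _
        have := Finset.sum_le_sum_of_subset (f := c k) hsub
        rwa [Finset.sum_pair (Ne.symm hj)] at this
      omega
    have hmon : ∀ n, monN (x n) (c k) = ((max (x n l) 1 : ℕ) : ℝ) := by
      intro n; unfold monN
      rw [Finset.prod_eq_single l]
      · rw [h1, pow_one]
      · intro b _ hb; rw [h0 b hb, pow_zero]
      · simp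
    obtain ⟨Ll, hLl⟩ := hLim l
    by_cases hLtop : Ll = ⊤
    · subst hLtop
      -- x n l → ∞, compare with e2 l
      have hFl : Tendsto (fun n => ((max (x n l) 1 : ℕ) : ℝ)) atTop atTop := by
        apply tendsto_natCast_atTop_atTop.comp
        apply tendsto_atTop_mono (fun n => Nat.le_max_left _ _)
        rw [tendsto_atTop_atTop]
        intro b
        have := hLl.eventually (eventually_gt_nhds
          (show ((b:ℕ):ℝ≥0∞) < ⊤ from ENNReal.natCast_lt_top b))
        obtain ⟨N, hN⟩ := this.exists_forall_of_atTop
        exact ⟨N, fun n hn => by exact_mod_cast (hN n hn).le⟩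
      apply not_tier1_of_ratio_zero (he2C l) ?_ ht
      have heq : (fun n => monN (x n) (c k) / monN (x n) (e2 l))
          = fun n => 1 / ((max (x n l) 1 : ℕ) : ℝ) := by
        funext n
        rw [hmon n, monN_e2, pow_two]
        rw [div_mul_eq_div_div, div_self]
        have : (1:ℝ) ≤ ((max (x n l) 1 : ℕ) : ℝ) := by exact_mod_cast Nat.le_max_right _ _
        linarith
      rw [heq]
      exact tendsto_const_nhds.div_atTop hFl
    · -- x n l is bounded, compare with e2 jinf
      obtain ⟨N, hN⟩ := ENNReal.exists_nat_gt (show Ll + 1 ≠ ⊤ by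
        simp [hLtop])
      have hevlt : ∀ᶠ n in atTop, ((x n l : ℕ) : ℝ≥0∞) < Ll + 1 :=
        hLl.eventually (eventually_lt_nhds (by
          exact ENNReal.lt_add_right hLtop one_ne_zero))
      have hbound : ∀ᶠ n in atTop, ((max (x n l) 1 : ℕ) : ℝ) ≤ ((max N 1 : ℕ) : ℝ) := by
        filter_upwards [hevlt] with n hn
        have hx : x n l ≤ N := by
          have : ((x n l : ℕ) : ℝ≥0∞) < (N : ℝ≥0∞) := hn.trans hN
          exact_mod_cast this.le
        have : max (x n l) 1 ≤ max N 1 := max_le_max hx le_rfl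
        exact_mod_cast this
      apply not_tier1_of_ratio_zero (he2C jinf) ?_ ht
      have hub : Tendsto (fun n => ((max N 1 : ℕ) : ℝ)
          / ((max (x n jinf) 1 : ℕ) : ℝ) ^ 2) atTop (𝓝 0) :=
        tendsto_const_nhds.div_atTop hGinf
      apply tendsto_of_tendsto_of_tendsto_of_le_of_le' tendsto_const_nhds hub
      · filter_upwards with n
        exact div_nonneg (monN_pos _ _).le (monN_pos _ _).le
      · filter_upwards [hbound] with n hn
        rw [hmon n, monN_e2]
        gcongr
end
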